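/- arXiv:2007.08171 — 3 statements merged into one kernel-verified Lean document; each statement's English description precedes it below -/
import Mathlib

section
/- For every r ∈ (0,1), the integral g(r) = ∫_1^∞ exp(-(r/2)(s + 1/s)) ds/s satisfies g(r) = -log r + O(1); more precisely, |g(r) + log r| ≤ 1/2 + 2·exp(-1/2) for all r ∈ (0,1). -/
open MeasureTheory Set Real Filter

noncomputable def g (r : ℝ) : ℝ :=
  ∫ s in Set.Ioi (1 : ℝ), Real.exp (-(r / 2) * (s + 1 / s)) / s

lemma exp_int (a : ℝ) {b : ℝ} (hb : 0 < b) :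
    ∫ x in Set.Ioi a, Real.exp (-b * x) = Real.exp (-b * a) / b := by
  have h := integral_Ioi_of_hasDerivAt_of_tendsto'
    (f := fun x => -Real.exp (-b * x) / b) (f' := fun x => Real.exp (-b * x)) (a := a) (m := 0)
    ?_ (exp_neg_integrableOn_Ioi a hb) ?_
  · rw [h]; ring
  · intro x _
    have h1 : HasDerivAt (fun x : ℝ => -b * x) (-b) x := by
      simpa using (hasDerivAt_id x).const_mul (-b)
    have h2 := ((h1.exp).neg).div_const b
    convert h2 using 1
    · rfl
    · rfl
    · rw [mul_neg, neg_neg, mul_div_assoc, div_self hb.ne', mul_one]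
  · have h3 : Tendsto (fun x : ℝ => -b * x) atTop atBot := by
      simpa [neg_mul, Function.comp_def] using tendsto_neg_atTop_atBot.comp (tendsto_id.const_mul_atTop hb)
    have h4 := (Real.tendsto_exp_atBot.comp h3).neg.div_const b
    rw [show (0:ℝ) = -0/b by ring]
    exact h4


theorem stmt_0 :
    ∀ r ∈ Set.Ioo (0 : ℝ) 1,
      |g r + Real.log r| ≤ 1 / 2 + 2 * Real.exp (-(1 / 2)) := by
  rintro r ⟨hr0, hr1⟩
  set L : ℝ := r⁻¹ with hLdef
  have hrr : r * L = 1 := mul_inv_cancel₀ hr0.ne'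
  have hL1 : 1 < L := by
    rcases lt_trichotomy 1 L with h | h | h
    · exact h
    · nlinarith
    · nlinarith [inv_pos.mpr hr0]
  have hL0 : 0 < L := lt_trans one_pos hL1
  have hr2 : 0 < r / 2 := by linarith
  set f : ℝ → ℝ := fun s => Real.exp (-(r / 2) * (s + 1 / s)) / s with hfdef
  -- pointwise bound by exp
  have hfle : ∀ s : ℝ, 1 < s → f s ≤ Real.exp (-(r / 2) * s) := by
    intro s hs
    have hs0 : 0 < s := lt_trans one_pos hs
    have h1 : Real.exp (-(r / 2) * (s + 1 / s)) ≤ Real.exp (-(r / 2) * s) := by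
      apply Real.exp_le_exp.mpr
      have h2 : 0 < 1 / s := by positivity
      nlinarith
    have h3 : f s ≤ Real.exp (-(r / 2) * (s + 1 / s)) :=
      div_le_self (Real.exp_pos _).le hs.le
    linarith
  have hfpos : ∀ s : ℝ, 1 < s → 0 < f s := fun s hs =>
    div_pos (Real.exp_pos _) (lt_trans one_pos hs)
  -- measurability
  have hmeas : Measurable f := by
    apply Measurable.div
    · apply Real.measurable_exp.comp
      fun_prop
    · exact measurable_id
  -- integrability of f on Ioi 1
  have hint : IntegrableOn f (Set.Ioi (1 : ℝ)) := by
    apply Integrable.mono (exp_neg_integrableOn_Ioi 1 hr2) hmeas.aestronglyMeasurable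
    rw [ae_restrict_iff' measurableSet_Ioi]
    filter_upwards with s hs
    rw [Real.norm_eq_abs, Real.norm_eq_abs, abs_of_pos (hfpos s hs),
      abs_of_pos (Real.exp_pos _)]
    exact hfle s hs
  have hintL : IntegrableOn f (Set.Ioi L) := hint.mono_set (Set.Ioi_subset_Ioi hL1.le)
  have hintIoc : IntegrableOn f (Set.Ioc 1 L) := hint.mono_set Set.Ioc_subset_Ioi_self
  -- integrability of 1/s on Ioc 1 L
  have hint1 : IntegrableOn (fun s : ℝ => 1 / s) (Set.Ioc 1 L) := by
    rw [← intervalIntegrable_iff_integrableOn_Ioc_of_le hL1.le]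
    apply intervalIntegral.intervalIntegrable_one_div
    · intro x hx
      have hnot := Set.notMem_uIcc_of_lt one_pos hL0
      exact fun h => hnot (h ▸ hx)
    · exact continuousOn_id
  -- split the integral
  have hsplit : ∫ s in Set.Ioi (1:ℝ), f s
      = (∫ s in Set.Ioc 1 L, f s) + ∫ s in Set.Ioi L, f s := by
    rw [← setIntegral_union Set.Ioc_disjoint_Ioi_same measurableSet_Ioi hintIoc hintL,
      Set.Ioc_union_Ioi_eq_Ioi hL1.le]
  -- the log integral
  have hlog : ∫ s in Set.Ioc 1 L, (1:ℝ) / s = - Real.log r := by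
    rw [← intervalIntegral.integral_of_le hL1.le, integral_one_div, div_one, hLdef,
      Real.log_inv]
    exact Set.notMem_uIcc_of_lt one_pos hL0
  -- key identity
  have hgr : g r = ∫ s in Set.Ioi (1:ℝ), f s := rfl
  have key : g r + Real.log r
      = (∫ s in Set.Ioc 1 L, (f s - 1 / s)) + ∫ s in Set.Ioi L, f s := by
    rw [integral_sub hintIoc hint1, hlog, hgr, hsplit]; ring
  -- bound for the first term
  have habs : ∀ s : ℝ, s ∈ Set.Ioc 1 L → |f s - 1 / s| ≤ r / 2 * (1 + 1 / s ^ 2) := by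
    intro s hs
    have hs1 : 1 < s := hs.1
    have hs0 : 0 < s := lt_trans one_pos hs1
    set x : ℝ := (r / 2) * (s + 1 / s) with hxdef
    have hx0 : 0 ≤ x := by positivity
    have hexp : 1 - x ≤ Real.exp (-x) := by
      have := Real.add_one_le_exp (-x); linarith
    have hexp1 : Real.exp (-x) ≤ 1 := Real.exp_le_one_iff.mpr (by linarith)
    have hfs : f s = Real.exp (-x) / s := by
      simp only [hfdef, hxdef]; ring_nf
    have h1 : f s - 1 / s = (Real.exp (-x) - 1) / s := by
      rw [hfs]; ring
    rw [h1, abs_div, abs_of_pos hs0, abs_of_nonpos (by linarith)]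
    have h2 : -(Real.exp (-x) - 1) ≤ x := by linarith
    have h3 : -(Real.exp (-x) - 1) / s ≤ x / s := by gcongr
    have h4 : x / s = r / 2 * (1 + 1 / s ^ 2) := by
      rw [hxdef]; field_simp
    linarith [h4 ▸ h3]
  -- integral of the bound
  have hboundint : ∫ s in Set.Ioc 1 L, (r / 2 * (1 + 1 / s ^ 2))
      = r / 2 * ((L - 1) + (1 - 1 / L)) := by
    rw [← intervalIntegral.integral_of_le hL1.le]
    have hz : (0:ℝ) ∉ Set.uIcc 1 L := Set.notMem_uIcc_of_lt one_pos hL0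
    have h2 : ∀ x ∈ Set.uIcc (1:ℝ) L, (r / 2 * (1 + 1 / x ^ 2)) = r/2 + r/2 * x ^ (-2 : ℤ) := by
      intro x hx
      have hx0 : x ≠ 0 := fun h => hz (h ▸ hx)
      have hx2 : x ^ (-2 : ℤ) = 1 / x ^ 2 := by
        rw [zpow_neg, one_div]
        norm_cast
      rw [hx2]
      ring
    rw [intervalIntegral.integral_congr (fun x hx => h2 x hx)]
    rw [intervalIntegral.integral_add intervalIntegrable_const
      ((intervalIntegral.intervalIntegrable_zpow (Or.inr hz)).const_mul _),
      intervalIntegral.integral_const, intervalIntegral.integral_const_mul,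
      integral_zpow (Or.inr ⟨by norm_num, hz⟩)]
    have : (-2 : ℤ) + 1 = -1 := by norm_num
    rw [this]
    push_cast
    rw [zpow_neg_one, zpow_neg_one]
    field_simp
    ring
  have hbd1 : |∫ s in Set.Ioc 1 L, (f s - 1 / s)| ≤ 1 / 2 := by
    have hbint : IntegrableOn (fun s : ℝ => r / 2 * (1 + 1 / s ^ 2)) (Set.Ioc 1 L) := by
      rw [← intervalIntegrable_iff_integrableOn_Ioc_of_le hL1.le]
      apply ContinuousOn.intervalIntegrable
      rw [Set.uIcc_of_le hL1.le]
      apply ContinuousOn.mul continuousOn_const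
      apply ContinuousOn.add continuousOn_const
      apply ContinuousOn.div continuousOn_const (by fun_prop)
      rintro x ⟨hx1, _⟩
      positivity
    have h5 : |∫ s in Set.Ioc 1 L, (f s - 1 / s)|
        ≤ ∫ s in Set.Ioc 1 L, (r / 2 * (1 + 1 / s ^ 2)) := by
      rw [← Real.norm_eq_abs]
      apply norm_integral_le_of_norm_le hbint
      rw [ae_restrict_iff' measurableSet_Ioc]
      filter_upwards with s hs
      rw [Real.norm_eq_abs]
      exact habs s hs
    rw [hboundint] at h5
    have h6 : r / 2 * ((L - 1) + (1 - 1 / L)) ≤ 1 / 2 := by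
      have hLinv : 1 / L = r := by
        rw [hLdef]; field_simp
      rw [hLinv]
      have : r * L = 1 := hrr
      nlinarith
    linarith
  -- bound for the second term
  have hbd2 : ∫ s in Set.Ioi L, f s ≤ 2 * Real.exp (-(1/2)) := by
    have hmono : ∫ s in Set.Ioi L, f s ≤ ∫ s in Set.Ioi L, r * Real.exp (-(r/2) * s) := by
      apply setIntegral_mono_on hintL _ measurableSet_Ioi
      · intro s hs
        have hsL : L < s := hs
        have hs1 : 1 < s := lt_trans hL1 hsL
        have hs0 : 0 < s := lt_trans one_pos hs1
        have h1 : 1 / s ≤ r := by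
          rw [div_le_iff₀ hs0]
          calc (1:ℝ) = r * L := hrr.symm
            _ ≤ r * s := by nlinarith
        calc f s = Real.exp (-(r / 2) * (s + 1 / s)) * (1 / s) := by
              rw [hfdef]; ring
          _ ≤ Real.exp (-(r / 2) * s) * r := by
              apply mul_le_mul _ h1 (by positivity) (Real.exp_pos _).le
              apply Real.exp_le_exp.mpr
              have : 0 < 1 / s := by positivity
              nlinarith
          _ = r * Real.exp (-(r/2) * s) := by ring
      · exact (exp_neg_integrableOn_Ioi L hr2).const_mul r
    have hval : ∫ s in Set.Ioi L, r * Real.exp (-(r/2) * s)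
        = 2 * Real.exp (-(1/2)) := by
      rw [MeasureTheory.integral_const_mul, exp_int L hr2]
      have h7 : -(r/2) * L = -(1/2) := by
        field_simp
        nlinarith
      rw [h7]
      field_simp
    linarith [hval ▸ hmono]
  have hpos2 : 0 ≤ ∫ s in Set.Ioi L, f s := by
    apply setIntegral_nonneg measurableSet_Ioi
    intro s hs
    exact (hfpos s (lt_trans hL1 hs)).le
  rw [key]
  calc |(∫ s in Set.Ioc 1 L, (f s - 1 / s)) + ∫ s in Set.Ioi L, f s|
      ≤ |∫ s in Set.Ioc 1 L, (f s - 1 / s)| + |∫ s in Set.Ioi L, f s| := abs_add_le _ _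
    _ ≤ 1 / 2 + 2 * Real.exp (-(1 / 2)) := by
        rw [abs_of_nonneg hpos2]
        linarith
end

section
/- Let ρ : ℝ² → ℝ be measurable with |ρ(x)| ≤ C(1 + |x|)^{-2-γ} for some constants C > 0 and γ > 0. Then sup over |x| > 1 of |∫_{ℝ²} |ρ(y)| · log(|x| / |x - y|) dy| is finite. -/
open MeasureTheory Real Set Metric


/-- For `w ≥ 1` and `a > 0`, `log w ≤ w^a / a`. -/
lemma aux_log_le_rpow_div {w a : ℝ} (hw : 1 ≤ w) (ha : 0 < a) :
    Real.log w ≤ w ^ a / a := by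
  have hw0 : 0 < w := lt_of_lt_of_le one_pos hw
  rw [le_div_iff₀ ha]
  calc Real.log w * a = Real.log (w ^ a) := by rw [Real.log_rpow hw0]; ring
    _ ≤ w ^ a - 1 := Real.log_le_sub_one_of_pos (Real.rpow_pos_of_pos hw0 a)
    _ ≤ w ^ a := by linarith

lemma aux_log_le_two_rpow {w : ℝ} (hw : 1 ≤ w) :
    Real.log w ≤ 2 * w ^ ((2:ℝ)⁻¹) := by
  have := aux_log_le_rpow_div hw (a := (2:ℝ)⁻¹) (by norm_num)
  calc Real.log w ≤ w ^ ((2:ℝ)⁻¹) / (2:ℝ)⁻¹ := this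
    _ = 2 * w ^ ((2:ℝ)⁻¹) := by ring

/-- Key pointwise estimate. -/
lemma aux_key {s t u : ℝ} (hs : 1 < s) (ht : 0 ≤ t) (h1 : s - u ≤ t) (h3 : t ≤ s + u)
    (hu : 0 ≤ u) :
    |Real.log (s / t)| ≤ 2 * Real.log (3 * (1 + u)) +
      (if t < 1 then 2 * t ^ (-(2:ℝ)⁻¹) else 0) := by
  have hs0 : 0 < s := lt_trans one_pos hs
  have h3u : (1:ℝ) ≤ 3 * (1 + u) := by nlinarith
  have hL3 : 0 ≤ Real.log (3 * (1 + u)) := Real.log_nonneg h3u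
  have hIf : 0 ≤ (if t < 1 then 2 * t ^ (-(2:ℝ)⁻¹) else 0) := by
    split
    · positivity
    · exact le_rfl
  rcases eq_or_lt_of_le ht with rfl | ht0
  · simp only [div_zero, Real.log_zero, abs_zero]
    positivity
  -- t > 0
  by_cases hu2 : 2 * u ≤ s
  · -- |y| small: ratio between 1/2 and 2
    have hts : t ≤ 2 * s := by linarith
    have hst : s ≤ 2 * t := by linarith
    have habs : |Real.log (s / t)| ≤ Real.log 2 := by
      rw [abs_le]
      constructor
      · have : Real.log (t / s) ≤ Real.log 2 := by
          apply Real.log_le_log (by positivity)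
          rw [div_le_iff₀ hs0]; linarith
        have heq : Real.log (s / t) = - Real.log (t / s) := by
          rw [← Real.log_inv]; congr 1; field_simp
        rw [heq]; linarith
      · apply Real.log_le_log (by positivity)
        rw [div_le_iff₀ ht0]; linarith
    have h23 : Real.log 2 ≤ Real.log (3 * (1 + u)) :=
      Real.log_le_log two_pos (by nlinarith)
    linarith
  · -- |y| large : s < 2u
    push_neg at hu2
    have hsu : s < 2 * (1 + u) := by linarith
    have hlogs : Real.log s ≤ Real.log (3 * (1 + u)) :=
      Real.log_le_log hs0 (by nlinarith)
    have hlogs0 : 0 ≤ Real.log s := Real.log_nonneg hs.le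
    rw [Real.log_div (ne_of_gt hs0) (ne_of_gt ht0)]
    by_cases ht1 : t < 1
    · have hlt : 0 ≤ - Real.log t := by
        simpa using Real.log_nonpos ht0.le ht1.le
      have hinv : Real.log t⁻¹ ≤ 2 * (t⁻¹) ^ ((2:ℝ)⁻¹) :=
        aux_log_le_two_rpow ((one_le_inv₀ ht0).2 ht1.le)
      have hinv' : - Real.log t ≤ 2 * t ^ (-(2:ℝ)⁻¹) := by
        rw [← Real.log_inv, Real.rpow_neg ht0.le, ← Real.inv_rpow ht0.le]
        exact hinv
      rw [if_pos ht1]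
      have : |Real.log s - Real.log t| = Real.log s + (- Real.log t) := by
        rw [abs_of_nonneg (by linarith)]; ring
      rw [this]
      linarith
    · push_neg at ht1
      have hlogt0 : 0 ≤ Real.log t := Real.log_nonneg ht1
      have hlogt : Real.log t ≤ Real.log (3 * (1 + u)) := by
        apply Real.log_le_log ht0; nlinarith
      rw [if_neg (not_lt.2 ht1)]
      have := abs_sub (Real.log s) (Real.log t)
      calc |Real.log s - Real.log t| ≤ |Real.log s| + |Real.log t| := abs_sub _ _
        _ = Real.log s + Real.log t := by rw [abs_of_nonneg hlogs0, abs_of_nonneg hlogt0]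
        _ ≤ 2 * Real.log (3 * (1 + u)) + 0 := by linarith
        _ = _ := by ring


noncomputable def gAux (t : ℝ) : ℝ := if |t| < 1 then |t| ^ (-(4:ℝ)⁻¹) else 0

noncomputable def hAux (z : EuclideanSpace ℝ (Fin 2)) : ℝ :=
  if ‖z‖ < 1 then 2 * ‖z‖ ^ (-(2:ℝ)⁻¹) else 0

lemma gAux_nonneg (t : ℝ) : 0 ≤ gAux t := by
  unfold gAux; split
  · positivity
  · exact le_rfl

lemma hAux_nonneg (z : EuclideanSpace ℝ (Fin 2)) : 0 ≤ hAux z := by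
  unfold hAux; split
  · positivity
  · exact le_rfl

lemma gAux_integrable : Integrable gAux := by
  have h01 : IntegrableOn (fun t : ℝ => |t| ^ (-(4:ℝ)⁻¹)) (Ioc 0 1) := by
    have h := (intervalIntegral.intervalIntegrable_rpow' (a := (0:ℝ)) (b := 1)
      (r := -(4:ℝ)⁻¹) (by norm_num)).1
    refine h.congr_fun (fun t ht => ?_) measurableSet_Ioc
    rw [abs_of_pos ht.1]
  have hIco : IntegrableOn (fun t : ℝ => |t| ^ (-(4:ℝ)⁻¹)) (Ico 0 1) := by
    rw [IntegrableOn, ← Measure.restrict_congr_set Ioo_ae_eq_Ico]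
    rw [IntegrableOn, ← Measure.restrict_congr_set Ioo_ae_eq_Ioc] at h01
    exact h01
  have hneg : IntegrableOn (fun t : ℝ => |t| ^ (-(4:ℝ)⁻¹)) (Ioc (-1) 0) := by
    have h2 : Integrable ((Ico (0:ℝ) 1).indicator fun t : ℝ => |t| ^ (-(4:ℝ)⁻¹)) := by
      rwa [integrable_indicator_iff measurableSet_Ico]
    have h3 := h2.comp_neg
    have h4 : (fun t : ℝ => ((Ico (0:ℝ) 1).indicator fun t : ℝ => |t| ^ (-(4:ℝ)⁻¹)) (-t)) =
        (Ioc (-1:ℝ) 0).indicator fun t : ℝ => |t| ^ (-(4:ℝ)⁻¹) := by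
      funext t
      by_cases h : -t ∈ Ico (0:ℝ) 1
      · rw [indicator_of_mem h, indicator_of_mem, abs_neg]
        exact ⟨by linarith [h.2], by linarith [h.1]⟩
      · rw [indicator_of_notMem h, indicator_of_notMem]
        intro hc
        exact h ⟨by linarith [hc.2], by linarith [hc.1]⟩
    rw [h4] at h3
    rwa [← integrable_indicator_iff measurableSet_Ioc]
  have hIoo : IntegrableOn (fun t : ℝ => |t| ^ (-(4:ℝ)⁻¹)) (Ioo (-1) 1) := by
    refine IntegrableOn.mono_set ?_ Ioo_subset_Ioc_self
    rw [← Set.Ioc_union_Ioc_eq_Ioc (by norm_num : (-1:ℝ) ≤ 0) (by norm_num : (0:ℝ) ≤ 1)]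
    exact hneg.union h01
  have hg : gAux = (Ioo (-1:ℝ) 1).indicator fun t : ℝ => |t| ^ (-(4:ℝ)⁻¹) := by
    funext t
    simp only [gAux, indicator_apply, mem_Ioo, ← abs_lt]
  rw [hg, integrable_indicator_iff measurableSet_Ioo]
  exact hIoo

lemma gAux_measurable : Measurable gAux := by
  unfold gAux
  exact Measurable.ite (measurableSet_lt (by fun_prop) measurable_const)
    (by fun_prop) measurable_const

lemma hAux_measurable : Measurable hAux := by
  unfold hAux
  exact Measurable.ite (measurableSet_lt (by fun_prop) measurable_const)
    (by fun_prop) measurable_const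

lemma coord_ae_ne (i : Fin 2) :
    ∀ᵐ z : EuclideanSpace ℝ (Fin 2), z i ≠ 0 := by
  have h : volume {z : EuclideanSpace ℝ (Fin 2) | z i = 0} = 0 := by
    have : {z : EuclideanSpace ℝ (Fin 2) | z i = 0} =
        (LinearMap.ker (EuclideanSpace.projₗ (𝕜 := ℝ) i) : Set (EuclideanSpace ℝ (Fin 2))) := by
      ext z; simp [LinearMap.mem_ker]
    rw [this]
    apply Measure.addHaar_submodule
    intro hker
    have h1 : (EuclideanSpace.single i (1:ℝ) : EuclideanSpace ℝ (Fin 2)) ∈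
        LinearMap.ker (EuclideanSpace.projₗ (𝕜 := ℝ) i) := hker ▸ Submodule.mem_top
    simp [LinearMap.mem_ker] at h1
  rw [ae_iff]
  simpa using h

lemma HAux_integrable :
    Integrable (fun z : EuclideanSpace ℝ (Fin 2) => 2 * (gAux (z 0) * gAux (z 1))) := by
  have hP : Integrable (fun p : ℝ × ℝ => gAux p.1 * gAux p.2) :=
    gAux_integrable.mul_prod gAux_integrable
  have hQ : Integrable (fun w : Fin 2 → ℝ => gAux (w 0) * gAux (w 1)) := by
    have := ((volume_preserving_piFinTwo fun _ : Fin 2 => ℝ).integrable_comp_emb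
      (MeasurableEquiv.piFinTwo fun _ : Fin 2 => ℝ).measurableEmbedding).2 hP
    simpa [Function.comp_def] using this
  have hE : Integrable (fun z : EuclideanSpace ℝ (Fin 2) => gAux (z 0) * gAux (z 1)) := by
    have := ((EuclideanSpace.volume_preserving_symm_measurableEquiv_toLp (Fin 2)).integrable_comp_emb
      (MeasurableEquiv.toLp 2 (Fin 2 → ℝ)).symm.measurableEmbedding).2 hQ
    simpa [Function.comp_def, MeasurableEquiv.coe_toLp_symm] using this
  exact hE.const_mul 2

lemma hAux_integrable : Integrable hAux := by
  refine HAux_integrable.mono' hAux_measurable.aestronglyMeasurable ?_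
  filter_upwards [coord_ae_ne 0, coord_ae_ne 1] with z h0 h1
  rw [Real.norm_eq_abs, abs_of_nonneg (hAux_nonneg z)]
  unfold hAux
  split
  case isFalse =>
    have := gAux_nonneg (z 0); have := gAux_nonneg (z 1); positivity
  case isTrue hlt =>
    have hnorm2 : ‖z‖ ^ 2 = z 0 ^ 2 + z 1 ^ 2 := by
      rw [EuclideanSpace.norm_eq, Real.sq_sqrt (by positivity), Fin.sum_univ_two]
      simp [Real.norm_eq_abs, sq_abs]
    have habs : ∀ j : Fin 2, |z j| ≤ ‖z‖ := by
      intro j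
      have h2 : |z j| ^ 2 ≤ ‖z‖ ^ 2 := by
        rw [sq_abs, hnorm2]
        have hsum : z j ^ 2 ≤ ∑ k, z k ^ 2 :=
          Finset.single_le_sum (f := fun k => z k ^ 2) (fun k _ => sq_nonneg (z k))
            (Finset.mem_univ j)
        rwa [Fin.sum_univ_two] at hsum
      calc |z j| = Real.sqrt (|z j| ^ 2) := (Real.sqrt_sq (abs_nonneg _)).symm
        _ ≤ Real.sqrt (‖z‖ ^ 2) := Real.sqrt_le_sqrt h2
        _ = ‖z‖ := Real.sqrt_sq (norm_nonneg _)
    have h0' : 0 < |z 0| := abs_pos.2 h0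
    have h1' : 0 < |z 1| := abs_pos.2 h1
    set A : ℝ := |z 0| * |z 1| with hA
    have hA0 : 0 < A := mul_pos h0' h1'
    have hsA : Real.sqrt A ≤ ‖z‖ := by
      rw [show ‖z‖ = Real.sqrt (‖z‖ ^ 2) from (Real.sqrt_sq (norm_nonneg _)).symm]
      apply Real.sqrt_le_sqrt
      rw [hnorm2]
      nlinarith [sq_nonneg (|z 0| - |z 1|), sq_abs (z 0), sq_abs (z 1)]
    have hkey : ‖z‖ ^ (-(2:ℝ)⁻¹) ≤ A ^ (-(4:ℝ)⁻¹) := by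
      have h5 : ‖z‖ ^ (-(2:ℝ)⁻¹) ≤ (Real.sqrt A) ^ (-(2:ℝ)⁻¹) :=
        Real.rpow_le_rpow_of_nonpos (Real.sqrt_pos.2 hA0) hsA (by norm_num)
      have h6 : (Real.sqrt A) ^ (-(2:ℝ)⁻¹) = A ^ (-(4:ℝ)⁻¹) := by
        rw [Real.sqrt_eq_rpow, ← Real.rpow_mul hA0.le]
        norm_num
      linarith [h6 ▸ h5]
    have hg0 : gAux (z 0) = |z 0| ^ (-(4:ℝ)⁻¹) := if_pos (lt_of_le_of_lt (habs 0) hlt)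
    have hg1 : gAux (z 1) = |z 1| ^ (-(4:ℝ)⁻¹) := if_pos (lt_of_le_of_lt (habs 1) hlt)
    rw [hg0, hg1, ← Real.mul_rpow (abs_nonneg _) (abs_nonneg _)]
    linarith

theorem stmt_3 (ρ : EuclideanSpace ℝ (Fin 2) → ℝ) (hρ : Measurable ρ)
    (C γ : ℝ) (hC : 0 < C) (hγ : 0 < γ)
    (hbound : ∀ x, |ρ x| ≤ C * (1 + ‖x‖) ^ (-(2 + γ))) :
    ∃ B : ℝ, ∀ x : EuclideanSpace ℝ (Fin 2), 1 < ‖x‖ →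
      |∫ y, |ρ y| * Real.log (‖x‖ / ‖x - y‖)| ≤ B := by
  set D : EuclideanSpace ℝ (Fin 2) → ℝ := fun y =>
    (2 * C * Real.log 3) * (1 + ‖y‖) ^ (-(2 + γ)) + (4 * C / γ) * (1 + ‖y‖) ^ (-(2 + γ / 2))
    with hD_def
  have hrank : (Module.finrank ℝ (EuclideanSpace ℝ (Fin 2)) : ℝ) = 2 := by
    rw [finrank_euclideanSpace_fin]; norm_num
  have hi1 : Integrable (fun y : EuclideanSpace ℝ (Fin 2) => (1 + ‖y‖) ^ (-(2 + γ))) :=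
    integrable_one_add_norm (by rw [hrank]; linarith)
  have hi2 : Integrable (fun y : EuclideanSpace ℝ (Fin 2) => (1 + ‖y‖) ^ (-(2 + γ / 2))) :=
    integrable_one_add_norm (by rw [hrank]; linarith)
  have hD : Integrable D := (hi1.const_mul _).add (hi2.const_mul _)
  refine ⟨(∫ y, D y) + C * ∫ z, hAux z, fun x hx => ?_⟩
  have hCH : Integrable (fun y : EuclideanSpace ℝ (Fin 2) => C * hAux (x - y)) :=
    (hAux_integrable.comp_sub_left x).const_mul C
  have hptwise : ∀ y : EuclideanSpace ℝ (Fin 2), |ρ y| * |Real.log (‖x‖ / ‖x - y‖)| ≤ D y + C * hAux (x - y) := by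
    intro y
    have hu : (0:ℝ) ≤ ‖y‖ := norm_nonneg _
    have hkey := aux_key (s := ‖x‖) (t := ‖x - y‖) (u := ‖y‖) hx (norm_nonneg _)
      (by linarith [norm_sub_norm_le x y]) (norm_sub_le x y) hu
    have hkey' : |Real.log (‖x‖ / ‖x - y‖)| ≤ 2 * Real.log (3 * (1 + ‖y‖)) + hAux (x - y) := by
      simpa [hAux] using hkey
    set P := (1 + ‖y‖) ^ (-(2 + γ)) with hP_def
    set Q := (1 + ‖y‖) ^ (-(2 + γ / 2)) with hQ_def
    set H := hAux (x - y) with hH_def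
    have hP0 : 0 ≤ P := Real.rpow_nonneg (by linarith) _
    have hQ0 : 0 ≤ Q := Real.rpow_nonneg (by linarith) _
    have hP1 : P ≤ 1 := Real.rpow_le_one_of_one_le_of_nonpos (by linarith) (by linarith)
    have hH0 : 0 ≤ H := hAux_nonneg _
    have hL : Real.log (3 * (1 + ‖y‖)) = Real.log 3 + Real.log (1 + ‖y‖) :=
      Real.log_mul (by norm_num) (by linarith)
    have hl0 : 0 ≤ Real.log (1 + ‖y‖) := Real.log_nonneg (by linarith)
    have hlog3 : 0 ≤ Real.log 3 := Real.log_nonneg (by norm_num)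
    have hPl : P * Real.log (1 + ‖y‖) ≤ (2 / γ) * Q := by
      have h1 : Real.log (1 + ‖y‖) ≤ (1 + ‖y‖) ^ (γ / 2) / (γ / 2) :=
        aux_log_le_rpow_div (by linarith) (by linarith)
      have h2 : P * ((1 + ‖y‖) ^ (γ / 2) / (γ / 2)) = (2 / γ) * Q := by
        rw [hP_def, hQ_def, div_eq_mul_inv, ← mul_assoc, ← Real.rpow_add (by linarith)]
        rw [show -(2 + γ) + γ / 2 = -(2 + γ / 2) by ring]
        rw [show ((γ:ℝ) / 2)⁻¹ = 2 / γ by field_simp]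
        ring
      calc P * Real.log (1 + ‖y‖) ≤ P * ((1 + ‖y‖) ^ (γ / 2) / (γ / 2)) := by
            apply mul_le_mul_of_nonneg_left h1 hP0
        _ = (2 / γ) * Q := h2
    have hlogabs : (0:ℝ) ≤ 2 * Real.log (3 * (1 + ‖y‖)) + H := by
      rw [hL]; linarith
    have step1 : |ρ y| * |Real.log (‖x‖ / ‖x - y‖)| ≤
        (C * P) * (2 * Real.log (3 * (1 + ‖y‖)) + H) :=
      mul_le_mul (hbound y) hkey' (abs_nonneg _) (by positivity)
    have step2 : (C * P) * (2 * Real.log (3 * (1 + ‖y‖)) + H) ≤ D y + C * H := by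
      rw [hL, hD_def]
      simp only [← hP_def, ← hQ_def]
      have e1 : (C * P) * (2 * (Real.log 3 + Real.log (1 + ‖y‖)) + H)
          = 2 * C * Real.log 3 * P + 2 * C * (P * Real.log (1 + ‖y‖)) + C * (P * H) := by ring
      rw [e1]
      have e2 : 2 * C * (P * Real.log (1 + ‖y‖)) ≤ 2 * C * ((2 / γ) * Q) := by
        apply mul_le_mul_of_nonneg_left hPl (by linarith)
      have e3 : C * (P * H) ≤ C * H := by
        apply mul_le_mul_of_nonneg_left _ hC.le
        nlinarith
      have e4 : 2 * C * ((2 / γ) * Q) = (4 * C / γ) * Q := by ring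
      nlinarith
    exact le_trans step1 step2
  calc |∫ y, |ρ y| * Real.log (‖x‖ / ‖x - y‖)|
      ≤ ∫ y, |ρ y| * |Real.log (‖x‖ / ‖x - y‖)| := by
        simpa [Real.norm_eq_abs, abs_mul, abs_abs] using
          norm_integral_le_integral_norm (fun y : EuclideanSpace ℝ (Fin 2) => |ρ y| * Real.log (‖x‖ / ‖x - y‖))
    _ ≤ ∫ y, (D y + C * hAux (x - y)) := by
        refine integral_mono_of_nonneg (ae_of_all _ fun y => by positivity) (hD.add hCH)
          (ae_of_all _ hptwise)
    _ = (∫ y, D y) + C * ∫ z, hAux z := by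
        rw [integral_add hD hCH, MeasureTheory.integral_const_mul,
          integral_sub_left_eq_self hAux volume x]
end

section
/- Let ρ : ℝ² → ℝ satisfy ∫_{ℝ²} ρ(x) dx = 1 and |ρ(x)| ≤ C(1 + |x|)^{-4-2γ} for some C, γ > 0, and set ρ_N(x) = 2^{2N} ρ(2^N x) for N ∈ ℕ. Then there is a constant C' such that for all N ∈ ℕ and all x with |x| ≤ 2^{-N}, one has |∫_{ℝ²} ρ_N(y) log|x - y| dy - log 2^{-N}| ≤ C'. -/
open MeasureTheory Metric Set

private lemma aux_inv_integrable :
    Integrable ((Metric.closedBall (0 : EuclideanSpace ℝ (Fin 2)) 1).indicator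
      (fun w => ‖w‖⁻¹)) := by
  set f : EuclideanSpace ℝ (Fin 2) → ℝ :=
    (Metric.closedBall (0 : EuclideanSpace ℝ (Fin 2)) 1).indicator (fun w => ‖w‖⁻¹) with hf
  have hmeas : Measurable f := (measurable_norm.inv).indicator measurableSet_closedBall
  have hnn : ∀ a, 0 ≤ f a := fun a =>
    Set.indicator_nonneg (fun w _ => inv_nonneg.mpr (norm_nonneg w)) a
  refine ⟨hmeas.aestronglyMeasurable, ?_⟩
  rw [hasFiniteIntegral_iff_ofReal (Filter.Eventually.of_forall hnn)]
  rw [lintegral_eq_lintegral_meas_le volume (Filter.Eventually.of_forall hnn)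
    hmeas.aemeasurable]
  have hsub1 : ∀ t : ℝ, 0 < t → {a : EuclideanSpace ℝ (Fin 2) | t ≤ f a} ⊆
      Metric.closedBall (0 : EuclideanSpace ℝ (Fin 2)) 1 := by
    intro t ht a ha
    by_contra h
    have : f a = 0 := Set.indicator_of_notMem h _
    rw [Set.mem_setOf_eq, this] at ha
    exact absurd ha (not_le.mpr ht)
  have hsub2 : ∀ t : ℝ, 1 < t → {a : EuclideanSpace ℝ (Fin 2) | t ≤ f a} ⊆
      Metric.closedBall (0 : EuclideanSpace ℝ (Fin 2)) t⁻¹ := by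
    intro t ht a ha
    have ht0 : 0 < t := lt_trans one_pos ht
    have haB : a ∈ Metric.closedBall (0 : EuclideanSpace ℝ (Fin 2)) 1 := hsub1 t ht0 ha
    have hfa : f a = ‖a‖⁻¹ := Set.indicator_of_mem haB _
    rw [Set.mem_setOf_eq, hfa] at ha
    have hna : a ≠ 0 := by
      intro h0
      rw [h0, norm_zero, inv_zero] at ha
      exact absurd ha (not_le.mpr ht0)
    have hnorm : 0 < ‖a‖ := norm_pos_iff.mpr hna
    rw [mem_closedBall_zero_iff]
    rw [le_inv_comm₀ ht0 hnorm] at ha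
    exact ha
  calc ∫⁻ t in Ioi (0:ℝ), volume {a | t ≤ f a}
      ≤ ∫⁻ t in Ioc (0:ℝ) 1 ∪ Ioi 1, volume {a | t ≤ f a} :=
        lintegral_mono_set Ioi_subset_Ioc_union_Ioi
    _ ≤ (∫⁻ t in Ioc (0:ℝ) 1, volume {a | t ≤ f a})
        + ∫⁻ t in Ioi (1:ℝ), volume {a | t ≤ f a} := lintegral_union_le _ _ _
    _ < ⊤ := by
        refine ENNReal.add_lt_top.2 ⟨?_, ?_⟩
        · calc ∫⁻ t in Ioc (0:ℝ) 1, volume {a | t ≤ f a}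
              ≤ ∫⁻ _ in Ioc (0:ℝ) 1,
                  volume (Metric.closedBall (0 : EuclideanSpace ℝ (Fin 2)) 1) := by
                refine setLIntegral_mono measurable_const ?_
                intro t ht
                exact measure_mono (hsub1 t ht.1)
            _ = volume (Metric.closedBall (0 : EuclideanSpace ℝ (Fin 2)) 1) * volume (Ioc (0:ℝ) 1) := by
                rw [setLIntegral_const]
            _ < ⊤ := by
                refine ENNReal.mul_lt_top measure_closedBall_lt_top ?_
                rw [Real.volume_Ioc]
                exact ENNReal.ofReal_lt_top
        · have hfin : (Module.finrank ℝ (EuclideanSpace ℝ (Fin 2))) = 2 := by simp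
          have hint2 : IntegrableOn (fun t : ℝ => t ^ (-2 : ℝ)) (Ioi 1) volume :=
            integrableOn_Ioi_rpow_of_lt (by norm_num) one_pos
          calc ∫⁻ t in Ioi (1:ℝ), volume {a | t ≤ f a}
              ≤ ∫⁻ t in Ioi (1:ℝ), ENNReal.ofReal (t ^ (-2:ℝ)) *
                  volume (Metric.ball (0 : EuclideanSpace ℝ (Fin 2)) 1) := by
                refine setLIntegral_mono (by fun_prop) ?_
                intro t ht
                refine (measure_mono (hsub2 t ht)).trans ?_
                rw [MeasureTheory.Measure.addHaar_closedBall volume _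
                  (inv_nonneg.mpr (le_of_lt (lt_trans one_pos ht))), hfin]
                have ht0 : (0:ℝ) < t := lt_trans one_pos ht
                have : (t⁻¹) ^ (2:ℕ) = t ^ (-2:ℝ) := by
                  rw [show (-2:ℝ) = -((2:ℕ):ℝ) by norm_num, Real.rpow_neg ht0.le,
                    Real.rpow_natCast, inv_pow]
                rw [this]
            _ = (∫⁻ t in Ioi (1:ℝ), ENNReal.ofReal (t ^ (-2:ℝ))) *
                  volume (Metric.ball (0 : EuclideanSpace ℝ (Fin 2)) 1) :=
                lintegral_mul_const' _ _ measure_ball_lt_top.ne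
            _ < ⊤ := by
                refine ENNReal.mul_lt_top ?_ measure_ball_lt_top
                calc ∫⁻ t in Ioi (1:ℝ), ENNReal.ofReal (t ^ (-2:ℝ))
                    ≤ ∫⁻ t in Ioi (1:ℝ), ‖(fun t : ℝ => t ^ (-2:ℝ)) t‖₊ := by
                      refine lintegral_mono fun t => ?_
                      exact ENNReal.ofReal_le_of_le_toReal (by simp [Real.norm_eq_abs, le_abs_self])
                  _ < ⊤ := hint2.2

private lemma kernel_bound (ρ : EuclideanSpace ℝ (Fin 2) → ℝ) (hρ : Measurable ρ)
    (C γ : ℝ) (hC : 0 < C) (hγ : 0 < γ)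
    (hbound : ∀ x, |ρ x| ≤ C * (1 + ‖x‖) ^ (-(4 + 2 * γ)))
    (u : EuclideanSpace ℝ (Fin 2)) (hu : ‖u‖ ≤ 1) :
    Integrable (fun z => ρ z * Real.log ‖u - z‖) ∧
    |∫ z, ρ z * Real.log ‖u - z‖| ≤
      C * (∫ w, (Metric.closedBall (0 : EuclideanSpace ℝ (Fin 2)) 1).indicator
            (fun w => ‖w‖⁻¹) w)
      + C * (∫ z : EuclideanSpace ℝ (Fin 2), (1 + ‖z‖) ^ (-(3 + 2 * γ))) := by
  have h32 : ((Module.finrank ℝ (EuclideanSpace ℝ (Fin 2))):ℝ) < 3 + 2 * γ := by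
    simp only [finrank_euclideanSpace_fin, Nat.cast_ofNat]
    linarith
  set ind : EuclideanSpace ℝ (Fin 2) → ℝ :=
    (Metric.closedBall (0 : EuclideanSpace ℝ (Fin 2)) 1).indicator (fun w => ‖w‖⁻¹) with hind
  have hind_nn : ∀ w, 0 ≤ ind w := fun w =>
    Set.indicator_nonneg (fun w _ => inv_nonneg.mpr (norm_nonneg w)) w
  have hint1 : Integrable (fun z : EuclideanSpace ℝ (Fin 2) => C * ind (z - u)) :=
    (aux_inv_integrable.comp_sub_right u).const_mul C
  have hint2 : Integrable (fun z : EuclideanSpace ℝ (Fin 2) =>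
      C * (1 + ‖z‖) ^ (-(3 + 2 * γ))) :=
    (integrable_one_add_norm h32).const_mul C
  set G : EuclideanSpace ℝ (Fin 2) → ℝ :=
    fun z => C * ind (z - u) + C * (1 + ‖z‖) ^ (-(3 + 2 * γ)) with hG
  have hGint : Integrable G := hint1.add hint2
  have hpt : ∀ z, |ρ z * Real.log ‖u - z‖| ≤ G z := by
    intro z
    rw [abs_mul]
    rcases le_or_gt ‖u - z‖ 1 with h | h
    · have h2 : (0:ℝ) ≤ C * (1 + ‖z‖) ^ (-(3 + 2 * γ)) := by positivity
      have hmem : z - u ∈ Metric.closedBall (0 : EuclideanSpace ℝ (Fin 2)) 1 := by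
        rw [mem_closedBall_zero_iff, norm_sub_rev]
        exact h
      have hindval : ind (z - u) = ‖u - z‖⁻¹ := by
        rw [hind, Set.indicator_of_mem hmem, norm_sub_rev]
      have hρz : |ρ z| ≤ C := by
        refine (hbound z).trans ?_
        have h1 : (1 + ‖z‖) ^ (-(4 + 2 * γ)) ≤ 1 :=
          Real.rpow_le_one_of_one_le_of_nonpos
            (by linarith [norm_nonneg z]) (by linarith)
        nlinarith
      have hlog : |Real.log ‖u - z‖| ≤ ‖u - z‖⁻¹ := by
        rcases eq_or_lt_of_le (norm_nonneg (u - z)) with h0 | h0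
        · rw [← h0]
          simp
        · have hl := Real.log_le_sub_one_of_pos (inv_pos.mpr h0)
          rw [Real.log_inv] at hl
          rw [abs_of_nonpos (Real.log_nonpos h0.le h)]
          linarith
      calc |ρ z| * |Real.log ‖u - z‖| ≤ C * ‖u - z‖⁻¹ :=
            mul_le_mul hρz hlog (abs_nonneg _) hC.le
        _ = C * ind (z - u) := by rw [hindval]
        _ ≤ G z := le_add_of_nonneg_right h2
    · have hind0 : 0 ≤ C * ind (z - u) := mul_nonneg hC.le (hind_nn _)
      have h0 : (0:ℝ) < ‖u - z‖ := lt_trans one_pos h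
      have hnb : ‖u - z‖ ≤ 1 + ‖z‖ := (norm_sub_le u z).trans (by linarith)
      have hlog : |Real.log ‖u - z‖| ≤ 1 + ‖z‖ := by
        rw [abs_of_nonneg (Real.log_nonneg h.le)]
        calc Real.log ‖u - z‖ ≤ ‖u - z‖ - 1 := Real.log_le_sub_one_of_pos h0
          _ ≤ 1 + ‖z‖ := by linarith
      calc |ρ z| * |Real.log ‖u - z‖|
          ≤ (C * (1 + ‖z‖) ^ (-(4 + 2 * γ))) * (1 + ‖z‖) :=
            mul_le_mul (hbound z) hlog (abs_nonneg _) (by positivity)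
        _ = C * (1 + ‖z‖) ^ (-(3 + 2 * γ)) := by
            rw [mul_assoc]
            congr 1
            have h1 : (0:ℝ) < 1 + ‖z‖ := by positivity
            nth_rewrite 2 [← Real.rpow_one (1 + ‖z‖)]
            rw [← Real.rpow_add h1]
            congr 1
            ring
        _ ≤ G z := le_add_of_nonneg_left hind0
  have hmeas : AEStronglyMeasurable (fun z => ρ z * Real.log ‖u - z‖) volume := by
    refine (hρ.mul ?_).aestronglyMeasurable
    exact Real.measurable_log.comp ((measurable_const.sub measurable_id).norm)
  have hInt : Integrable (fun z => ρ z * Real.log ‖u - z‖) := by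
    refine Integrable.mono' hGint hmeas (Filter.Eventually.of_forall ?_)
    intro z
    rw [Real.norm_eq_abs]
    exact hpt z
  refine ⟨hInt, ?_⟩
  calc |∫ z, ρ z * Real.log ‖u - z‖|
      ≤ ∫ z, |ρ z * Real.log ‖u - z‖| := by
        simpa only [Real.norm_eq_abs] using norm_integral_le_integral_norm (fun z => ρ z * Real.log ‖u - z‖)
    _ ≤ ∫ z, G z := integral_mono hInt.abs hGint hpt
    _ = C * (∫ w, ind w) + C * (∫ z : EuclideanSpace ℝ (Fin 2),
          (1 + ‖z‖) ^ (-(3 + 2 * γ))) := by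
        rw [hG]
        rw [integral_add hint1 hint2, integral_const_mul, integral_const_mul,
          integral_sub_right_eq_self ind u]

theorem stmt_4 (ρ : EuclideanSpace ℝ (Fin 2) → ℝ) (hρ : Measurable ρ)
    (hint : ∫ x, ρ x = 1)
    (C γ : ℝ) (hC : 0 < C) (hγ : 0 < γ)
    (hbound : ∀ x, |ρ x| ≤ C * (1 + ‖x‖) ^ (-(4 + 2 * γ))) :
    ∃ C' : ℝ, ∀ N : ℕ, ∀ x : EuclideanSpace ℝ (Fin 2), ‖x‖ ≤ (2 : ℝ) ^ (-(N : ℝ)) →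
      |(∫ y, (2 : ℝ) ^ (2 * N) * ρ ((2 : ℝ) ^ N • y) * Real.log ‖x - y‖)
        - Real.log ((2 : ℝ) ^ (-(N : ℝ)))| ≤ C' := by
  have h42 : ((Module.finrank ℝ (EuclideanSpace ℝ (Fin 2))):ℝ) < 4 + 2 * γ := by
    simp only [finrank_euclideanSpace_fin, Nat.cast_ofNat]
    linarith
  have hρint : Integrable ρ := by
    refine Integrable.mono' ((integrable_one_add_norm h42).const_mul C)
      hρ.aestronglyMeasurable (Filter.Eventually.of_forall ?_)
    intro z
    rw [Real.norm_eq_abs]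
    exact hbound z
  refine ⟨C * (∫ w, (Metric.closedBall (0 : EuclideanSpace ℝ (Fin 2)) 1).indicator
      (fun w => ‖w‖⁻¹) w)
      + C * (∫ z : EuclideanSpace ℝ (Fin 2), (1 + ‖z‖) ^ (-(3 + 2 * γ))), ?_⟩
  intro N x hx
  set c : ℝ := (2:ℝ) ^ N with hc
  have hcpos : 0 < c := pow_pos two_pos N
  have hcinv : ((2:ℝ) ^ (-(N:ℝ))) = c⁻¹ := by
    rw [Real.rpow_neg (by norm_num), Real.rpow_natCast]
  set u : EuclideanSpace ℝ (Fin 2) := c • x with hu_def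
  have hu : ‖u‖ ≤ 1 := by
    rw [hu_def, norm_smul, Real.norm_eq_abs, abs_of_pos hcpos]
    calc c * ‖x‖ ≤ c * c⁻¹ := by
          refine mul_le_mul_of_nonneg_left ?_ hcpos.le
          rw [← hcinv]
          exact hx
      _ = 1 := mul_inv_cancel₀ hcpos.ne'
  obtain ⟨hFint, hFbd⟩ := kernel_bound ρ hρ C γ hC hγ hbound u hu
  have hfin2 : (Module.finrank ℝ (EuclideanSpace ℝ (Fin 2))) = 2 := by simp
  have key : (∫ y, (2:ℝ) ^ (2 * N) * ρ (c • y) * Real.log ‖x - y‖)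
      = ∫ z, ρ z * Real.log ‖x - c⁻¹ • z‖ := by
    calc (∫ y, (2:ℝ) ^ (2 * N) * ρ (c • y) * Real.log ‖x - y‖)
        = ∫ y, (2:ℝ) ^ (2 * N) *
            ((fun z => ρ z * Real.log ‖x - c⁻¹ • z‖) (c • y)) := by
          congr 1
          funext y
          simp only
          rw [smul_smul, inv_mul_cancel₀ hcpos.ne', one_smul]
          ring
      _ = (2:ℝ) ^ (2 * N) *
            ∫ y, (fun z => ρ z * Real.log ‖x - c⁻¹ • z‖) (c • y) :=
          integral_const_mul _ _
      _ = (2:ℝ) ^ (2 * N) *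
            (|(c ^ Module.finrank ℝ (EuclideanSpace ℝ (Fin 2)))⁻¹| •
              ∫ z, ρ z * Real.log ‖x - c⁻¹ • z‖) := by
          rw [MeasureTheory.Measure.integral_comp_smul volume
            (fun z => ρ z * Real.log ‖x - c⁻¹ • z‖) c]
      _ = ∫ z, ρ z * Real.log ‖x - c⁻¹ • z‖ := by
          rw [hfin2, smul_eq_mul, abs_of_pos (by positivity), ← mul_assoc]
          have hcc : (2:ℝ) ^ (2 * N) * (c ^ 2)⁻¹ = 1 := by
            rw [hc, ← pow_mul, Nat.mul_comm]
            exact mul_inv_cancel₀ (pow_ne_zero _ two_ne_zero)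
          rw [hcc, one_mul]
  have hae : (fun z => ρ z * Real.log ‖x - c⁻¹ • z‖)
      =ᵐ[(volume : Measure (EuclideanSpace ℝ (Fin 2)))]
      (fun z => ρ z * Real.log c⁻¹ + ρ z * Real.log ‖u - z‖) := by
    have hne : ∀ᵐ z : EuclideanSpace ℝ (Fin 2), z ≠ u := by
      rw [ae_iff]
      have h0 : volume ({u} : Set (EuclideanSpace ℝ (Fin 2))) = 0 := measure_singleton u
      simp [Set.setOf_eq_eq_singleton, h0]
    filter_upwards [hne] with z hz
    have e2 : x - c⁻¹ • z = c⁻¹ • (u - z) := by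
      rw [smul_sub, hu_def, smul_smul, inv_mul_cancel₀ hcpos.ne', one_smul]
    have hnz : ‖u - z‖ ≠ 0 := by
      rw [norm_ne_zero_iff]
      exact sub_ne_zero.mpr (Ne.symm hz)
    rw [e2, norm_smul, Real.norm_eq_abs, abs_of_pos (inv_pos.mpr hcpos),
      Real.log_mul (inv_ne_zero hcpos.ne') hnz, mul_add]
  rw [key, integral_congr_ae hae, integral_add (hρint.mul_const _) hFint,
    integral_mul_const, hint, one_mul, hcinv, add_sub_cancel_left]
  exact hFbd
end
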